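/- Let γ = ((i₁ j₁),…,(i_k j_k)) ∈ Σ*_n(k) and let l ∈ {1,…,k}. Then j_l is the minimum of the intersection of {i_l+1, i_l+2, …, n} with the support of γ_l, i.e. j_l = min{x ∈ supp(γ_l) : x > i_l}. -/

import Mathlib

/-- ℓ(σ): the number of cycles (orbits) of σ, including fixed points, counted via the
minimal representative of each orbit. -/
noncomputable def cycleCount {n : ℕ} (σ : Equiv.Perm (Fin n)) : ℕ :=
  Set.ncard {x : Fin n | ∀ y, σ.SameCycle x y → x ≤ y}

/-- |σ| := n − ℓ(σ). -/
noncomputable def normPerm {n : ℕ} (σ : Equiv.Perm (Fin n)) : ℕ := n - cycleCount σ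

/-- σ₁ ≼ σ₂ iff |σ₂| = |σ₁| + |σ₁⁻¹σ₂|. -/
def precLe {n : ℕ} (σ₁ σ₂ : Equiv.Perm (Fin n)) : Prop :=
  normPerm σ₂ = normPerm σ₁ + normPerm (σ₁⁻¹ * σ₂)

/-- Σ_n(k): tuples of k transpositions with |τ₁⋯τ_k| = k and τ₁⋯τ_k ≼ (1 … n). -/
def SigmaSet (n k : ℕ) : Set (Fin k → Equiv.Perm (Fin n)) :=
  {τ | (∀ l, (τ l).IsSwap) ∧ normPerm (List.ofFn τ).prod = k ∧
      precLe (List.ofFn τ).prod (finRotate n)}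

/-- γ_m := τ₁∘⋯∘τ_m, the product of the first m entries of the chain. -/
def gammaP {n k : ℕ} (τ : Fin k → Equiv.Perm (Fin n)) (m : ℕ) : Equiv.Perm (Fin n) :=
  ((List.ofFn τ).take m).prod

open Equiv Equiv.Perm Set

namespace Stmt15

variable {n : ℕ}

/-- set of minima of classes of a relation -/
def minSet (r : Fin n → Fin n → Prop) : Set (Fin n) := {x | ∀ y, r x y → x ≤ y}

theorem cycleCount_eq (σ : Perm (Fin n)) : cycleCount σ = (minSet σ.SameCycle).ncard := rfl

/-- the minimum of the class of x -/
noncomputable def rmin (r : Fin n → Fin n → Prop) (hr : Equivalence r) (x : Fin n) : Fin n :=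
  (Set.toFinite {y | r x y}).toFinset.min' ⟨x, by simp [hr.refl x]⟩

theorem rmin_rel (r : Fin n → Fin n → Prop) (hr : Equivalence r) (x : Fin n) :
    r x (rmin r hr x) := by
  have := Finset.min'_mem (Set.toFinite {y | r x y}).toFinset ⟨x, by simp [hr.refl x]⟩
  simpa [rmin] using this

theorem rmin_le (r : Fin n → Fin n → Prop) (hr : Equivalence r) {x y : Fin n} (h : r x y) :
    rmin r hr x ≤ y := Finset.min'_le _ _ (by simpa using h)

theorem rmin_mem_minSet (r : Fin n → Fin n → Prop) (hr : Equivalence r) (x : Fin n) :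
    rmin r hr x ∈ minSet r := by
  intro y hy
  exact rmin_le r hr (hr.trans (rmin_rel r hr x) hy)

theorem minSet_eq_of_iff {r s : Fin n → Fin n → Prop} (h : ∀ x y, r x y ↔ s x y) :
    minSet r = minSet s := by
  ext x; constructor <;> intro hx y hy
  · exact hx y ((h x y).2 hy)
  · exact hx y ((h x y).1 hy)

/-- if r refines s, there are at least as many r-classes -/
theorem minSet_card_mono {r s : Fin n → Fin n → Prop} (hr : Equivalence r) (hs : Equivalence s)
    (hrs : ∀ x y, r x y → s x y) : (minSet s).ncard ≤ (minSet r).ncard := by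
  apply Set.ncard_le_ncard_of_injOn (rmin r hr)
  · intro a _; exact rmin_mem_minSet r hr a
  · intro a ha b hb hab
    have h1 : r a (rmin r hr a) := rmin_rel r hr a
    have h2 : r b (rmin r hr a) := hab ▸ rmin_rel r hr b
    have hab' : s a b := hrs _ _ (hr.trans h1 (hr.symm h2))
    exact le_antisymm (ha b hab') (hb a (hs.symm hab'))

/-- merging the classes of a and b -/
def mergeRel (r : Fin n → Fin n → Prop) (a b : Fin n) : Fin n → Fin n → Prop :=
  fun x y => r x y ∨ ((r x a ∨ r x b) ∧ (r y a ∨ r y b))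

theorem mergeRel_equiv {r : Fin n → Fin n → Prop} (hr : Equivalence r) (a b : Fin n) :
    Equivalence (mergeRel r a b) := by
  constructor
  · intro x; exact Or.inl (hr.refl x)
  · rintro x y (h | ⟨h1, h2⟩)
    · exact Or.inl (hr.symm h)
    · exact Or.inr ⟨h2, h1⟩
  · rintro x y z (h | ⟨h1, h2⟩) (h' | ⟨h1', h2'⟩)
    · exact Or.inl (hr.trans h h')
    · refine Or.inr ⟨?_, h2'⟩
      rcases h1' with h1' | h1'
      · exact Or.inl (hr.trans h h1')
      · exact Or.inr (hr.trans h h1')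
    · refine Or.inr ⟨h1, ?_⟩
      rcases h2 with h2 | h2
      · exact Or.inl (hr.trans (hr.symm h') h2)
      · exact Or.inr (hr.trans (hr.symm h') h2)
    · exact Or.inr ⟨h1, h2'⟩

theorem minSet_card_merge {r : Fin n → Fin n → Prop} (hr : Equivalence r) {a b : Fin n}
    (hab : ¬ r a b) :
    (minSet (mergeRel r a b)).ncard + 1 = (minSet r).ncard := by
  set ma := rmin r hr a with hma
  set mb := rmin r hr b with hmb
  have hmane : ma ≠ mb := by
    intro h
    apply hab
    have h1 : r a ma := rmin_rel r hr a
    have h2 : r b mb := rmin_rel r hr b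
    rw [← h] at h2
    exact hr.trans h1 (hr.symm h2)
  set M := max ma mb with hM
  set m := min ma mb with hm
  have hmM : m < M := min_lt_max.mpr hmane
  have hmem : ∀ z : Fin n, (z = ma ∨ z = mb) → (r z a ∨ r z b) := by
    rintro z (rfl | rfl)
    · exact Or.inl (hr.symm (rmin_rel r hr a))
    · exact Or.inr (hr.symm (rmin_rel r hr b))
  have hMor : M = ma ∨ M = mb := by
    rcases le_total ma mb with h | h
    · exact Or.inr (max_eq_right h)
    · exact Or.inl (max_eq_left h)
  have hmor : m = ma ∨ m = mb := by
    rcases le_total ma mb with h | h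
    · exact Or.inl (min_eq_left h)
    · exact Or.inr (min_eq_right h)
  have hMmin : M ∈ minSet r := by
    rcases hMor with h | h
    · exact h ▸ rmin_mem_minSet r hr a
    · exact h ▸ rmin_mem_minSet r hr b
  have hMnot : M ∉ minSet (mergeRel r a b) := by
    intro h
    have : M ≤ m := h m (Or.inr ⟨hmem M hMor, hmem m hmor⟩)
    exact absurd this (not_le.2 hmM)
  have hset : minSet r = insert M (minSet (mergeRel r a b)) := by
    ext x
    constructor
    · intro hx
      by_cases hxM : x = M
      · exact hxM ▸ mem_insert _ _
      · refine Set.mem_insert_of_mem _ ?_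
        rintro y (hy | ⟨hy1, hy2⟩)
        · exact hx y hy
        · -- x is related to a or b, and x is an r-min, so x = ma or x = mb, hence x = m
          have hxm : x = ma ∨ x = mb := by
            rcases hy1 with h | h
            · left
              exact le_antisymm (hx ma (hr.trans h (rmin_rel r hr a)))
                (rmin_le r hr (hr.symm h))
            · right
              exact le_antisymm (hx mb (hr.trans h (rmin_rel r hr b)))
                (rmin_le r hr (hr.symm h))
          have hxem : x = m := by
            have hp : x = m ∨ x = M := by
              rcases le_total ma mb with h | h
              · rw [hm, hM, min_eq_left h, max_eq_right h]; tauto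
              · rw [hm, hM, min_eq_right h, max_eq_left h]; tauto
            tauto
          subst hxem
          rcases hy2 with h | h
          · calc m ≤ ma := min_le_left _ _
              _ ≤ y := rmin_le r hr (hr.symm h)
          · calc m ≤ mb := min_le_right _ _
              _ ≤ y := rmin_le r hr (hr.symm h)
    · rintro (rfl | hx)
      · exact hMmin
      · intro y hy
        exact hx y (Or.inl hy)
  rw [hset, Set.ncard_insert_of_notMem hMnot (Set.toFinite _)]

/-! ### walk lemmas for multiplication by a swap -/

theorem mulswap_apply_of_ne {σ : Perm (Fin n)} {a b z : Fin n} (hza : z ≠ a) (hzb : z ≠ b) :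
    (σ * Equiv.swap a b) z = σ z := by
  rw [Perm.mul_apply, Equiv.swap_apply_of_ne_of_ne hza hzb]

theorem mulswap_apply_a {σ : Perm (Fin n)} {a b : Fin n} :
    (σ * Equiv.swap a b) a = σ b := by rw [Perm.mul_apply, Equiv.swap_apply_left]

theorem mulswap_apply_b {σ : Perm (Fin n)} {a b : Fin n} :
    (σ * Equiv.swap a b) b = σ a := by rw [Perm.mul_apply, Equiv.swap_apply_right]

theorem sameCycle_imp {σ : Perm (Fin n)} {r : Fin n → Fin n → Prop} (hr : Equivalence r)
    (hstep : ∀ z, r z (σ z)) : ∀ x y, σ.SameCycle x y → r x y := by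
  intro x y h
  have key : ∀ t : ℕ, r x ((σ ^ t) x) := by
    intro t
    induction t with
    | zero => simpa using hr.refl x
    | succ t ih =>
      rw [pow_succ', Perm.mul_apply]
      exact hr.trans ih (hstep _)
  obtain ⟨t, -, rfl⟩ := h.exists_pow_eq'
  exact key t

theorem sameCycle_mulswap_subset_merge {σ : Perm (Fin n)} {a b : Fin n} :
    ∀ x y, (σ * Equiv.swap a b).SameCycle x y → mergeRel σ.SameCycle a b x y := by
  apply sameCycle_imp (mergeRel_equiv (SameCycle.equivalence σ) a b)
  intro z
  by_cases hza : z = a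
  · subst hza
    rw [mulswap_apply_a]
    exact Or.inr ⟨Or.inl (SameCycle.refl σ z), Or.inr (SameCycle.symm (SameCycle.refl σ b).apply_right)⟩
  · by_cases hzb : z = b
    · subst hzb
      rw [mulswap_apply_b]
      exact Or.inr ⟨Or.inr (SameCycle.refl σ z), Or.inl (SameCycle.symm (SameCycle.refl σ a).apply_right)⟩
    · rw [mulswap_apply_of_ne hza hzb]
      exact Or.inl (SameCycle.refl σ z).apply_right

theorem sameCycle_mulswap_ab {σ : Perm (Fin n)} {a b : Fin n} (hab : ¬ σ.SameCycle a b) :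
    (σ * Equiv.swap a b).SameCycle a b := by
  set π := σ * Equiv.swap a b with hπ
  have key : ∀ t : ℕ, 1 ≤ t → π.SameCycle a ((σ ^ t) b) := by
    intro t
    induction t with
    | zero => omega
    | succ t ih =>
      intro _
      by_cases ht0 : t = 0
      · subst ht0
        have : (σ ^ 1) b = π a := by rw [pow_one, hπ, mulswap_apply_a]
        rw [this]
        exact (SameCycle.refl π a).apply_right
      · have iht := ih (by omega)
        by_cases hza : (σ ^ t) b = a
        · exact absurd ⟨(t : ℤ), by rw [zpow_natCast, hza]⟩ (fun h => hab (SameCycle.symm h))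
        · by_cases hzb : (σ ^ t) b = b
          · have : (σ ^ (t+1)) b = π a := by
              rw [pow_succ', Perm.mul_apply, hzb, hπ, mulswap_apply_a]
            rw [this]
            exact (SameCycle.refl π a).apply_right
          · have : (σ ^ (t+1)) b = π ((σ ^ t) b) := by
              rw [pow_succ', Perm.mul_apply, hπ, mulswap_apply_of_ne hza hzb]
            rw [this]
            exact iht.apply_right
  have h1 : 1 ≤ orderOf σ := orderOf_pos σ
  have := key (orderOf σ) h1
  rwa [pow_orderOf_eq_one, Perm.one_apply] at this

theorem sameCycle_mulswap_of_not {σ : Perm (Fin n)} {a b : Fin n} (hab : ¬ σ.SameCycle a b)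
    {x y : Fin n} (h : σ.SameCycle x y) : (σ * Equiv.swap a b).SameCycle x y := by
  set π := σ * Equiv.swap a b with hπ
  have hW : π.SameCycle a b := sameCycle_mulswap_ab hab
  have key : ∀ t : ℕ, π.SameCycle x ((σ ^ t) x) := by
    intro t
    induction t with
    | zero => simpa using SameCycle.refl π x
    | succ t ih =>
      by_cases hza : (σ ^ t) x = a
      · have : (σ ^ (t+1)) x = π b := by
          rw [pow_succ', Perm.mul_apply, hza, hπ, mulswap_apply_b]
        rw [this]
        exact ((ih.trans (hza ▸ SameCycle.refl π _ : π.SameCycle ((σ^t) x) a)).trans hW).apply_right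
      · by_cases hzb : (σ ^ t) x = b
        · have : (σ ^ (t+1)) x = π a := by
            rw [pow_succ', Perm.mul_apply, hzb, hπ, mulswap_apply_a]
          rw [this]
          exact ((ih.trans (hzb ▸ SameCycle.refl π _ : π.SameCycle ((σ^t) x) b)).trans hW.symm).apply_right
        · have : (σ ^ (t+1)) x = π ((σ ^ t) x) := by
            rw [pow_succ', Perm.mul_apply, hπ, mulswap_apply_of_ne hza hzb]
          rw [this]
          exact ih.apply_right
  obtain ⟨t, -, rfl⟩ := h.exists_pow_eq'
  exact key t

theorem sameCycle_mulswap_iff_merge {σ : Perm (Fin n)} {a b : Fin n} (hab : ¬ σ.SameCycle a b) :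
    ∀ x y, (σ * Equiv.swap a b).SameCycle x y ↔ mergeRel σ.SameCycle a b x y := by
  intro x y
  constructor
  · exact sameCycle_mulswap_subset_merge x y
  · set π := σ * Equiv.swap a b with hπ
    have hW : π.SameCycle a b := sameCycle_mulswap_ab hab
    rintro (h | ⟨h1, h2⟩)
    · exact sameCycle_mulswap_of_not hab h
    · have hx : π.SameCycle x b := by
        rcases h1 with h1 | h1
        · exact (sameCycle_mulswap_of_not hab h1).trans hW
        · exact sameCycle_mulswap_of_not hab h1
      have hy : π.SameCycle y b := by
        rcases h2 with h2 | h2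
        · exact (sameCycle_mulswap_of_not hab h2).trans hW
        · exact sameCycle_mulswap_of_not hab h2
      exact hx.trans hy.symm

theorem cycleCount_mulswap_of_not {σ : Perm (Fin n)} {a b : Fin n} (hab : ¬ σ.SameCycle a b) :
    cycleCount (σ * Equiv.swap a b) + 1 = cycleCount σ := by
  rw [cycleCount_eq, cycleCount_eq,
    minSet_eq_of_iff (fun x y => sameCycle_mulswap_iff_merge hab x y)]
  exact minSet_card_merge (SameCycle.equivalence σ) hab

theorem not_sameCycle_mulswap {σ : Perm (Fin n)} {a b : Fin n} (hab : a ≠ b)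
    (hsc : σ.SameCycle a b) : ¬ (σ * Equiv.swap a b).SameCycle a b := by
  set π := σ * Equiv.swap a b with hπ
  obtain ⟨p0, hp0pos, -, hp0⟩ := (hsc.symm).exists_pow_eq''
  have hex : ∃ p, 0 < p ∧ (σ ^ p) b = a := ⟨p0, hp0pos, hp0⟩
  set P := Nat.find hex with hPdef
  obtain ⟨hPpos, hPeq⟩ : 0 < P ∧ (σ ^ P) b = a := Nat.find_spec hex
  have hmin : ∀ t, t < P → ¬(0 < t ∧ (σ ^ t) b = a) := fun t ht => Nat.find_min hex ht
  have hnoret : ∀ t, 0 < t → t < P → (σ ^ t) b ≠ b := by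
    intro t ht htP hret
    have hq : ∀ q, (σ ^ (t * q)) b = b := by
      intro q
      induction q with
      | zero => simp
      | succ q ih => rw [Nat.mul_succ, pow_add, Perm.mul_apply, hret, ih]
    have hkey : (σ ^ (P % t)) b = a := by
      have h2 : (σ ^ (P % t + t * (P / t))) b = a := by rw [Nat.mod_add_div]; exact hPeq
      rwa [pow_add, Perm.mul_apply, hq] at h2
    by_cases h0 : P % t = 0
    · rw [h0] at hkey; simp at hkey; exact hab hkey.symm
    · exact hmin (P % t) (lt_of_lt_of_le (Nat.mod_lt _ ht) htP.le) ⟨Nat.pos_of_ne_zero h0, hkey⟩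
  have hwalk : ∀ t, 1 ≤ t → t ≤ P → (π ^ t) a = (σ ^ t) b := by
    intro t
    induction t with
    | zero => omega
    | succ t ih =>
      intro _ h2
      by_cases ht0 : t = 0
      · subst ht0; rw [pow_one, pow_one, hπ, mulswap_apply_a]
      · have iht := ih (by omega) (by omega)
        have hza : (σ ^ t) b ≠ a := by
          intro h
          exact hmin t (by omega) ⟨by omega, h⟩
        have hzb : (σ ^ t) b ≠ b := hnoret t (by omega) (by omega)
        have e1 : (π ^ (t+1)) a = π ((σ ^ t) b) := by rw [pow_succ', Perm.mul_apply, iht]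
        have e2 : (σ * Equiv.swap a b) ((σ ^ t) b) = σ ((σ ^ t) b) :=
          mulswap_apply_of_ne hza hzb
        rw [e1, hπ, e2, pow_succ', Perm.mul_apply]
  have hPa : (π ^ P) a = a := by rw [hwalk P hPpos le_rfl, hPeq]
  have hq : ∀ q, (π ^ (P * q)) a = a := by
    intro q
    induction q with
    | zero => simp
    | succ q ih => rw [Nat.mul_succ, pow_add, Perm.mul_apply, hPa, ih]
  intro hcon
  obtain ⟨t, -, hteq⟩ := hcon.exists_pow_eq'
  have hmod : (π ^ (t % P)) a = b := by
    have h2 : (π ^ (t % P + P * (t / P))) a = b := by rw [Nat.mod_add_div]; exact hteq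
    rwa [pow_add, Perm.mul_apply, hq] at h2
  by_cases h0 : t % P = 0
  · rw [h0] at hmod; simp at hmod; exact hab hmod
  · have hs : t % P < P := Nat.mod_lt _ hPpos
    have := hwalk (t % P) (Nat.pos_of_ne_zero h0) hs.le
    rw [this] at hmod
    exact hnoret (t % P) (Nat.pos_of_ne_zero h0) hs hmod

theorem cycleCount_mulswap_of_sameCycle {σ : Perm (Fin n)} {a b : Fin n} (hab : a ≠ b)
    (hsc : σ.SameCycle a b) : cycleCount σ + 1 = cycleCount (σ * Equiv.swap a b) := by
  have h2 : (σ * Equiv.swap a b) * Equiv.swap a b = σ := by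
    rw [mul_assoc, Equiv.swap_mul_self, mul_one]
  have := cycleCount_mulswap_of_not (not_sameCycle_mulswap hab hsc)
  rwa [h2] at this

/-! ### norm arithmetic -/

theorem cycleCount_le (σ : Perm (Fin n)) : cycleCount σ ≤ n := by
  rw [cycleCount_eq]
  calc (minSet σ.SameCycle).ncard ≤ (Set.univ : Set (Fin n)).ncard :=
        Set.ncard_le_ncard (Set.subset_univ _) Set.finite_univ
    _ = n := by rw [Set.ncard_univ]; simp

theorem cycleCount_pos (hn : 0 < n) (σ : Perm (Fin n)) : 0 < cycleCount σ := by
  rw [cycleCount_eq, Set.ncard_pos (Set.toFinite _)]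
  exact ⟨rmin σ.SameCycle (SameCycle.equivalence σ) ⟨0, hn⟩,
    rmin_mem_minSet σ.SameCycle (SameCycle.equivalence σ) _⟩

theorem cycleCount_one : cycleCount (1 : Perm (Fin n)) = n := by
  rw [cycleCount_eq]
  have : minSet (SameCycle (1 : Perm (Fin n))) = Set.univ := by
    ext x
    simp only [minSet, Set.mem_setOf_eq, Set.mem_univ, iff_true]
    intro y hy
    rw [sameCycle_one] at hy
    exact hy.le
  rw [this, Set.ncard_univ]; simp

theorem normPerm_one : normPerm (1 : Perm (Fin n)) = 0 := by
  simp [normPerm, cycleCount_one]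

theorem eq_one_of_normPerm_zero {σ : Perm (Fin n)} (h : normPerm σ = 0) : σ = 1 := by
  have hle := cycleCount_le σ
  have hcc : cycleCount σ = n := by
    simp only [normPerm] at h
    omega
  have hset : minSet σ.SameCycle = Set.univ := by
    apply Set.eq_of_subset_of_ncard_le (Set.subset_univ _) _ Set.finite_univ
    rw [← cycleCount_eq, hcc, Set.ncard_univ]; simp
  have hmono : ∀ x : Fin n, x ≤ σ x := by
    intro x
    have hx : x ∈ minSet σ.SameCycle := hset ▸ Set.mem_univ x
    exact hx (σ x) (SameCycle.refl σ x).apply_right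
  by_contra hne
  have : ∃ x : Fin n, x < σ x := by
    by_contra hno
    push_neg at hno
    exact hne (Equiv.ext fun x => le_antisymm (hno x) (hmono x))
  obtain ⟨x, hx⟩ := this
  have hsum : ∑ y : Fin n, ((σ y : ℕ)) = ∑ y : Fin n, (y : ℕ) :=
    Equiv.sum_comp σ (fun y => (y : ℕ))
  have hlt : ∑ y : Fin n, ((y : ℕ)) < ∑ y : Fin n, ((σ y : ℕ)) := by
    apply Finset.sum_lt_sum
    · intro i _
      exact_mod_cast hmono i
    · exact ⟨x, Finset.mem_univ x, by exact_mod_cast hx⟩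
  omega

theorem normPerm_mulswap_of_not {σ : Perm (Fin n)} {a b : Fin n} (hab : ¬ σ.SameCycle a b) :
    normPerm (σ * Equiv.swap a b) = normPerm σ + 1 := by
  have h := cycleCount_mulswap_of_not hab
  have h1 := cycleCount_le σ
  have h2 := cycleCount_le (σ * Equiv.swap a b)
  have h3 : 0 < n := lt_of_le_of_lt (Nat.zero_le _) a.2
  have h4 := cycleCount_pos h3 (σ * Equiv.swap a b)
  simp only [normPerm]
  omega

theorem normPerm_mulswap_of_sameCycle {σ : Perm (Fin n)} {a b : Fin n} (hab : a ≠ b)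
    (hsc : σ.SameCycle a b) :
    normPerm σ = normPerm (σ * Equiv.swap a b) + 1 := by
  have h := cycleCount_mulswap_of_sameCycle hab hsc
  have h1 := cycleCount_le σ
  have h2 := cycleCount_le (σ * Equiv.swap a b)
  have h3 : 0 < n := lt_of_le_of_lt (Nat.zero_le _) a.2
  have h4 := cycleCount_pos h3 σ
  simp only [normPerm]
  omega

theorem normPerm_mulswap_le {σ : Perm (Fin n)} (a b : Fin n) :
    normPerm (σ * Equiv.swap a b) ≤ normPerm σ + 1 := by
  by_cases hab : a = b
  · subst hab
    have : Equiv.swap a a = 1 := Equiv.swap_self a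
    rw [this, mul_one]
    omega
  · by_cases hsc : σ.SameCycle a b
    · have := normPerm_mulswap_of_sameCycle hab hsc
      omega
    · have := normPerm_mulswap_of_not hsc
      omega

theorem normPerm_inv (σ : Perm (Fin n)) : normPerm σ⁻¹ = normPerm σ := by
  simp only [normPerm, cycleCount_eq]
  congr 2
  exact minSet_eq_of_iff (fun x y => sameCycle_inv)

/-- a permutation is a product of normPerm many transpositions -/
theorem exists_swap_list (σ : Perm (Fin n)) :
    ∃ L : List (Perm (Fin n)), (∀ τ ∈ L, ∃ a b : Fin n, a ≠ b ∧ τ = Equiv.swap a b) ∧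
      L.length = normPerm σ ∧ L.prod = σ := by
  generalize hm : normPerm σ = m
  induction m generalizing σ with
  | zero =>
    refine ⟨[], by simp, by simp, ?_⟩
    rw [List.prod_nil, eq_one_of_normPerm_zero hm]
  | succ m ih =>
    have hne : σ ≠ 1 := by
      intro h
      rw [h, normPerm_one] at hm
      omega
    have hx : ∃ x : Fin n, σ x ≠ x := by
      by_contra hno
      push_neg at hno
      exact hne (Equiv.ext hno)
    obtain ⟨x, hx⟩ := hx
    have hsc : σ.SameCycle x (σ x) := (SameCycle.refl σ x).apply_right
    have hnorm := normPerm_mulswap_of_sameCycle (Ne.symm hx) hsc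
    rw [hm] at hnorm
    obtain ⟨L', hL'1, hL'2, hL'3⟩ := ih (σ * Equiv.swap x (σ x)) (by omega)
    refine ⟨L' ++ [Equiv.swap x (σ x)], ?_, ?_, ?_⟩
    · intro τ hτ
      rcases List.mem_append.1 hτ with h | h
      · exact hL'1 τ h
      · rw [List.mem_singleton] at h
        exact ⟨x, σ x, Ne.symm hx, h⟩
    · rw [List.length_append, hL'2]; simp; try omega
    · rw [List.prod_append, List.prod_singleton, hL'3, mul_assoc, Equiv.swap_mul_self, mul_one]

theorem normPerm_mul_swaps_le (α : Perm (Fin n)) :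
    ∀ L : List (Perm (Fin n)), (∀ τ ∈ L, ∃ a b : Fin n, a ≠ b ∧ τ = Equiv.swap a b) →
      normPerm (α * L.prod) ≤ normPerm α + L.length := by
  intro L
  induction L generalizing α with
  | nil => simp
  | cons τ L' ih =>
    intro hL
    obtain ⟨a, b, -, rfl⟩ := hL τ List.mem_cons_self
    have h1 : α * (Equiv.swap a b :: L').prod = (α * Equiv.swap a b) * L'.prod := by
      rw [List.prod_cons, mul_assoc]
    rw [h1]
    have h2 := ih (α * Equiv.swap a b) (fun τ hτ => hL τ (List.mem_cons_of_mem _ hτ))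
    have h3 := normPerm_mulswap_le (σ := α) a b
    simp only [List.length_cons]
    omega

theorem normPerm_mul_le (α β : Perm (Fin n)) :
    normPerm (α * β) ≤ normPerm α + normPerm β := by
  obtain ⟨L, hL1, hL2, hL3⟩ := exists_swap_list β
  calc normPerm (α * β) = normPerm (α * L.prod) := by rw [hL3]
    _ ≤ normPerm α + L.length := normPerm_mul_swaps_le α L hL1
    _ = normPerm α + normPerm β := by rw [hL2]

theorem sameCycle_of_mulswap_sameCycle {σ : Perm (Fin n)} {a b : Fin n}
    (hsc : σ.SameCycle a b) {x y : Fin n} (h : (σ * Equiv.swap a b).SameCycle x y) :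
    σ.SameCycle x y := by
  revert h
  apply sameCycle_imp (SameCycle.equivalence σ)
  intro z
  by_cases hza : z = a
  · subst hza
    rw [mulswap_apply_a]
    exact hsc.apply_right
  · by_cases hzb : z = b
    · subst hzb
      rw [mulswap_apply_b]
      exact hsc.symm.apply_right
    · rw [mulswap_apply_of_ne hza hzb]
      exact (SameCycle.refl σ z).apply_right

/-! ### increasing cycles and noncrossing -/

def INC (σ : Perm (Fin n)) : Prop :=
  ∀ a y, σ.SameCycle a y → a < y → a < σ a ∧ σ a ≤ y

def NC (σ : Perm (Fin n)) : Prop :=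
  ∀ a x b y, σ.SameCycle a b → σ.SameCycle x y → ¬σ.SameCycle a x →
    a < x → x < b → b < y → False

/-- in an increasing cycle, the maximum maps to the minimum of the cycle -/
theorem apply_max_le {σ : Perm (Fin n)} (hI : INC σ) {u : Fin n} (hu : σ u ≠ u)
    (hmax : ∀ w, σ.SameCycle u w → w ≤ u) : ∀ w, σ.SameCycle u w → σ u ≤ w := by
  intro w hw
  have hσe := SameCycle.equivalence σ
  set m := rmin σ.SameCycle hσe u with hmdef
  have hum : σ.SameCycle u m := rmin_rel σ.SameCycle hσe u
  have hmle : m ≤ w := rmin_le σ.SameCycle hσe hw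
  set z := σ⁻¹ m with hzdef
  have hσz : σ z = m := σ.apply_symm_apply m
  have huz : σ.SameCycle u z := sameCycle_symm_apply_right.mpr hum
  have hzm : z ≠ m := by
    intro h
    have hfix : σ m = m := by rw [← h, hσz, h]
    have := hum.eq_of_right hfix
    rw [← this] at hfix
    exact hu hfix
  have hmz : m < z := lt_of_le_of_ne (rmin_le σ.SameCycle hσe huz) (Ne.symm hzm)
  by_cases hzu : z = u
  · rw [← hzu, hσz]
    exact hmle
  · have hzltu : z < u := lt_of_le_of_ne (hmax z huz) hzu
    have := hI z u huz.symm hzltu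
    rw [hσz] at this
    exact absurd this.1 (not_lt.2 hmz.le)

/-- two elements in different cycles of π but the same cycle of σ, where
π refines σ with one more cycle: impossible to have three mutually-non-π-related
elements in one σ-class -/
theorem three_classes {σ π : Perm (Fin n)} (hsub : ∀ x y, π.SameCycle x y → σ.SameCycle x y)
    (hcount : cycleCount σ + 1 = cycleCount π) {p q r : Fin n}
    (hpq : ¬π.SameCycle p q) (hpr : ¬π.SameCycle p r) (hqr : ¬π.SameCycle q r)
    (hσpq : σ.SameCycle p q) (hσpr : σ.SameCycle p r) : False := by
  have hπe := SameCycle.equivalence π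
  have hσe := SameCycle.equivalence σ
  set m1 := rmin π.SameCycle hπe p with hm1
  set m2 := rmin π.SameCycle hπe q with hm2
  set m3 := rmin π.SameCycle hπe r with hm3
  have hr1 : π.SameCycle p m1 := rmin_rel _ hπe p
  have hr2 : π.SameCycle q m2 := rmin_rel _ hπe q
  have hr3 : π.SameCycle r m3 := rmin_rel _ hπe r
  have hin1 : m1 ∈ minSet π.SameCycle := rmin_mem_minSet _ hπe p
  have hin2 : m2 ∈ minSet π.SameCycle := rmin_mem_minSet _ hπe q
  have hin3 : m3 ∈ minSet π.SameCycle := rmin_mem_minSet _ hπe r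
  have hne12 : m1 ≠ m2 := fun h => hpq (hr1.trans (h ▸ hr2.symm))
  have hne13 : m1 ≠ m3 := fun h => hpr (hr1.trans (h ▸ hr3.symm))
  have hne23 : m2 ≠ m3 := fun h => hqr (hr2.trans (h ▸ hr3.symm))
  -- σ-links between the minima
  have hσ12 : σ.SameCycle m1 m2 :=
    ((hsub _ _ hr1).symm.trans hσpq).trans (hsub _ _ hr2)
  have hσ13 : σ.SameCycle m1 m3 :=
    ((hsub _ _ hr1).symm.trans hσpr).trans (hsub _ _ hr3)
  have hσ23 : σ.SameCycle m2 m3 := hσ12.symm.trans hσ13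
  have hsubset : minSet σ.SameCycle ⊆ minSet π.SameCycle := by
    intro z hz y hy
    exact hz y (hsub _ _ hy)
  have huniq : ∀ u v : Fin n, u ∈ minSet σ.SameCycle → v ∈ minSet σ.SameCycle →
      σ.SameCycle u v → u = v := by
    intro u v hu hv huv
    exact le_antisymm (hu v huv) (hv u huv.symm)
  -- pick two of the three minima not in minSet σ
  have hpick : ∃ p' q' : Fin n, p' ≠ q' ∧ p' ∈ minSet π.SameCycle ∧ q' ∈ minSet π.SameCycle ∧
      p' ∉ minSet σ.SameCycle ∧ q' ∉ minSet σ.SameCycle := by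
    by_cases c1 : m1 ∈ minSet σ.SameCycle
    · refine ⟨m2, m3, hne23, hin2, hin3, ?_, ?_⟩
      · intro c; exact hne12 (huniq m1 m2 c1 c hσ12)
      · intro c; exact hne13 (huniq m1 m3 c1 c hσ13)
    · by_cases c2 : m2 ∈ minSet σ.SameCycle
      · refine ⟨m1, m3, hne13, hin1, hin3, c1, ?_⟩
        intro c; exact hne23 (huniq m2 m3 c2 c hσ23)
      · exact ⟨m1, m2, hne12, hin1, hin2, c1, c2⟩
  obtain ⟨p', q', hne, hp1, hq1, hp2, hq2⟩ := hpick
  have hsub2 : insert p' (insert q' (minSet σ.SameCycle)) ⊆ minSet π.SameCycle := by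
    intro z hz
    rcases Set.mem_insert_iff.1 hz with rfl | hz
    · exact hp1
    · rcases Set.mem_insert_iff.1 hz with rfl | hz
      · exact hq1
      · exact hsubset hz
  have hcard : (minSet σ.SameCycle).ncard + 2 ≤ (minSet π.SameCycle).ncard := by
    have h1 : (insert p' (insert q' (minSet σ.SameCycle))).ncard =
        (minSet σ.SameCycle).ncard + 2 := by
      rw [Set.ncard_insert_of_notMem (by
          intro h
          rcases Set.mem_insert_iff.1 h with h | h
          · exact hne h
          · exact hp2 h) (Set.toFinite _),
        Set.ncard_insert_of_notMem hq2 (Set.toFinite _)]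
    rw [← h1]
    exact Set.ncard_le_ncard hsub2 (Set.toFinite _)
  rw [← cycleCount_eq, ← cycleCount_eq] at hcard
  omega

/-- splitting a cycle of a noncrossing increasing permutation at a < b keeps it
noncrossing increasing -/
theorem step_preserve {σ : Perm (Fin n)} {a b : Fin n} (hab : a < b) (hs : σ.SameCycle a b)
    (hI : INC σ) (hN : NC σ) : INC (σ * Equiv.swap a b) ∧ NC (σ * Equiv.swap a b) := by
  have hσe := SameCycle.equivalence σ
  set π := σ * Equiv.swap a b with hπ
  have habne : a ≠ b := ne_of_lt hab
  have hπa : π a = σ b := mulswap_apply_a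
  have hπb : π b = σ a := mulswap_apply_b
  have hπz : ∀ z : Fin n, z ≠ a → z ≠ b → π z = σ z := fun z h1 h2 => mulswap_apply_of_ne h1 h2
  have hσbne : σ b ≠ b := by
    intro h
    exact habne (hs.eq_of_right h)
  have hσane : σ a ≠ a := by
    intro h
    exact habne (hs.eq_of_left h)
  have hincl : ∀ x y, π.SameCycle x y → σ.SameCycle x y :=
    fun x y h => sameCycle_of_mulswap_sameCycle hs h
  set T : Set (Fin n) := {z | σ.SameCycle a z ∧ a < z ∧ z ≤ b} with hT
  have hbT : b ∈ T := ⟨hs, hab, le_rfl⟩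
  have haT : a ∉ T := fun h => lt_irrefl a h.2.1
  have hmapsTo : ∀ z ∈ T, π z ∈ T := by
    rintro z ⟨hz1, hz2, hz3⟩
    by_cases hzb : z = b
    · rw [hzb, hπb]
      obtain ⟨h1, h2⟩ := hI a b hs hab
      exact ⟨(SameCycle.refl σ a).apply_right, h1, h2⟩
    · have hz3' : z < b := lt_of_le_of_ne hz3 hzb
      have hza : z ≠ a := ne_of_gt hz2
      rw [hπz z hza hzb]
      obtain ⟨h1, h2⟩ := hI z b (hz1.symm.trans hs) hz3'
      exact ⟨hz1.apply_right, lt_trans hz2 h1, h2⟩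
  have hmapsToInv : ∀ z ∈ T, π⁻¹ z ∈ T := by
    rintro z ⟨hz1, hz2, hz3⟩
    have hπinv : π⁻¹ z = Equiv.swap a b (σ⁻¹ z) := by
      rw [hπ, mul_inv_rev, Perm.mul_apply, Equiv.swap_inv]
    set w := σ⁻¹ z with hwdef
    have hσw : σ w = z := σ.apply_symm_apply z
    have haw : σ.SameCycle a w := sameCycle_symm_apply_right.mpr hz1
    by_cases hwa : w = a
    · rw [hπinv, hwa, Equiv.swap_apply_left]
      exact hbT
    · by_cases hwb : w = b
      · exfalso
        have hzσb : z = σ b := by rw [← hwb, hσw]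
        by_cases hbmax : ∃ v, σ.SameCycle b v ∧ b < v
        · obtain ⟨v, hv1, hv2⟩ := hbmax
          obtain ⟨h1, -⟩ := hI b v hv1 hv2
          rw [← hzσb] at h1
          exact absurd h1 (not_lt.2 hz3)
        · push_neg at hbmax
          have hmax : ∀ v, σ.SameCycle b v → v ≤ b := hbmax
          have := apply_max_le hI hσbne hmax a hs.symm
          rw [← hzσb] at this
          exact absurd this (not_le.2 hz2)
      · rw [hπinv, Equiv.swap_apply_of_ne_of_ne hwa hwb]
        have hwz : σ w ≠ w := by
          intro h
          rw [hσw] at h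
          rw [← h] at hσw
          -- σ z = z, z fixed; but a ~ z and a < z impossible
          have := hz1.eq_of_right (h ▸ hσw)
          exact absurd this (ne_of_lt hz2)
        refine ⟨haw, ?_, ?_⟩
        · by_contra hcon
          push_neg at hcon
          have hwa' : w < a := lt_of_le_of_ne hcon hwa
          obtain ⟨-, h2⟩ := hI w a haw.symm hwa'
          rw [hσw] at h2
          exact absurd h2 (not_le.2 hz2)
        · by_contra hcon
          push_neg at hcon
          by_cases hwmax : ∃ v, σ.SameCycle w v ∧ w < v
          · obtain ⟨v, hv1, hv2⟩ := hwmax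
            obtain ⟨h1, -⟩ := hI w v hv1 hv2
            rw [hσw] at h1
            exact absurd (lt_trans hcon h1) (not_lt.2 hz3)
          · push_neg at hwmax
            have := apply_max_le hI hwz hwmax a haw.symm
            rw [hσw] at this
            exact absurd this (not_le.2 hz2)
  have hfwd : ∀ (t : ℕ) (z : Fin n), z ∈ T → (π ^ t) z ∈ T := by
    intro t
    induction t with
    | zero => intro z hz; simpa using hz
    | succ t ih =>
      intro z hz
      rw [pow_succ', Perm.mul_apply]
      exact hmapsTo _ (ih z hz)
  have hbwd : ∀ (t : ℕ) (z : Fin n), (π ^ t) z ∈ T → z ∈ T := by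
    intro t
    induction t with
    | zero => intro z hz; simpa using hz
    | succ t ih =>
      intro z hz
      rw [pow_succ, Perm.mul_apply] at hz
      have := ih (π z) hz
      have h2 := hmapsToInv _ this
      rwa [Perm.inv_def, Equiv.symm_apply_apply] at h2
  have hmemT : ∀ u v : Fin n, π.SameCycle u v → (u ∈ T ↔ v ∈ T) := by
    intro u v h
    obtain ⟨t, -, rfl⟩ := h.exists_pow_eq'
    exact ⟨hfwd t u, hbwd t u⟩
  have hK2 : ∀ v, π.SameCycle a v → v ∉ T := fun v h hv => haT ((hmemT a v h).2 hv)
  have hK1 : ∀ v, π.SameCycle b v → v ∈ T := fun v h => (hmemT b v h).1 hbT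
  have hcount : cycleCount σ + 1 = cycleCount π := cycleCount_mulswap_of_sameCycle habne hs
  have hINC : INC π := by
    intro u v huv hlt
    have hσuv := hincl _ _ huv
    by_cases hub : u = b
    · subst hub
      exact absurd hlt (not_lt.2 (hK1 v huv).2.2)
    · by_cases hua : u = a
      · subst hua
        have hvT := hK2 v huv
        have hbv : b < v := by
          by_contra hcon
          push_neg at hcon
          exact hvT ⟨hσuv, hlt, hcon⟩
        obtain ⟨h1, h2⟩ := hI b v (hs.symm.trans hσuv) hbv
        rw [hπa]
        exact ⟨lt_trans hab h1, h2⟩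
      · rw [hπz u hua hub]
        exact hI u v hσuv hlt
  refine ⟨hINC, ?_⟩
  intro u x w y h_uw h_xy h_nux h1 h2 h3
  have hσuw := hincl _ _ h_uw
  have hσxy := hincl _ _ h_xy
  by_cases hux : σ.SameCycle u x
  · by_cases hEa : σ.SameCycle u a
    · -- everything in the cycle of a and b
      have hxa : σ.SameCycle x a := hux.symm.trans hEa
      have hUW := hmemT u w h_uw
      have hXY := hmemT x y h_xy
      by_cases hu : u ∈ T <;> by_cases hx : x ∈ T
      · -- both in T : three distinct π-classes within one σ-class
        refine three_classes hincl hcount h_nux ?_ ?_ hux hEa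
        · intro h; exact hK2 u h.symm hu
        · intro h; exact hK2 x h.symm hx
      · -- u ∈ T, x ∉ T : but u < x < w forces x ∈ T
        have hwT := hUW.1 hu
        apply hx
        refine ⟨hxa.symm, lt_trans hu.2.1 h1, le_trans (le_of_lt h2) hwT.2.2⟩
      · -- u ∉ T, x ∈ T : w ∉ T but x < w < y ≤ b and a < x gives w ∈ T
        have hyT := hXY.1 hx
        have hwnT : w ∉ T := fun hw => hu (hUW.2 hw)
        apply hwnT
        have hσaw : σ.SameCycle a w := hEa.symm.trans hσuw
        refine ⟨hσaw, lt_trans hx.2.1 h2, le_trans (le_of_lt h3) hyT.2.2⟩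
      · -- both outside T
        refine three_classes hincl hcount h_nux ?_ ?_ hux (hEa.trans hs)
        · intro h; exact hu (hK1 u h.symm)
        · intro h; exact hx (hK1 x h.symm)
    · -- the σ-cycle of u does not contain a (nor b): π agrees with σ on it
      apply h_nux
      have hEb : ¬ σ.SameCycle u b := fun h => hEa (h.trans hs.symm)
      have key : ∀ t : ℕ, π.SameCycle u ((σ ^ t) u) := by
        intro t
        induction t with
        | zero => simpa using SameCycle.refl π u
        | succ t ih =>
          have hza : (σ ^ t) u ≠ a := by
            intro h
            exact hEa ⟨(t : ℤ), by rw [zpow_natCast, h]⟩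
          have hzb : (σ ^ t) u ≠ b := by
            intro h
            exact hEb ⟨(t : ℤ), by rw [zpow_natCast, h]⟩
          have : (σ ^ (t+1)) u = π ((σ ^ t) u) := by
            rw [pow_succ', Perm.mul_apply, hπz _ hza hzb]
          rw [this]
          exact ih.apply_right
      obtain ⟨t, -, rfl⟩ := hux.exists_pow_eq'
      exact key t
  · exact hN u x w y hσuw hσxy hux h1 h2 h3

/-! ### finRotate facts and the descent -/

theorem sameCycle_finRotate_total (hn : 0 < n) (x y : Fin n) : (finRotate n).SameCycle x y := by
  match n, hn, x, y with
  | 1, _, x, y =>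
    have hxy : x = y := Subsingleton.elim x y
    rw [hxy]
  | (m+2), _, x, y =>
    apply (isCycle_finRotate (n := m)).sameCycle
    · exact Equiv.Perm.mem_support.1 (by rw [support_finRotate]; exact Finset.mem_univ x)
    · exact Equiv.Perm.mem_support.1 (by rw [support_finRotate]; exact Finset.mem_univ y)

theorem cycleCount_finRotate (hn : 0 < n) : cycleCount (finRotate n) = 1 := by
  have hset : minSet (finRotate n).SameCycle = {(⟨0, hn⟩ : Fin n)} := by
    ext x
    simp only [minSet, Set.mem_setOf_eq, Set.mem_singleton_iff]
    constructor
    · intro h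
      have h1 := h ⟨0, hn⟩ (sameCycle_finRotate_total hn _ _)
      have h2 : (⟨0, hn⟩ : Fin n) ≤ x := by
        rw [Fin.le_def]
        exact Nat.zero_le _
      exact le_antisymm h1 h2
    · rintro rfl y -
      rw [Fin.le_def]
      exact Nat.zero_le _
  rw [cycleCount_eq, hset, Set.ncard_singleton]

theorem normPerm_finRotate (hn : 0 < n) : normPerm (finRotate n) = n - 1 := by
  rw [normPerm, cycleCount_finRotate hn]

theorem INC_finRotate : INC (finRotate n) := by
  intro a y hsc hlt
  match n, a, y, hlt with
  | (m+1), a, y, hlt =>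
    have hy : (y : ℕ) ≤ m := Nat.lt_succ_iff.1 y.2
    have ha : (a : ℕ) < m := lt_of_lt_of_le hlt hy
    have hlast : a < Fin.last m := by
      rw [Fin.lt_def, Fin.val_last]
      exact ha
    have hval : ((a + 1 : Fin (m+1)) : ℕ) = (a : ℕ) + 1 := Fin.val_add_one_of_lt hlast
    rw [finRotate_succ_apply]
    constructor
    · rw [Fin.lt_def, hval]
      omega
    · rw [Fin.le_def, hval]
      exact hlt

theorem NC_finRotate : NC (finRotate n) := by
  intro a x b y hab hxy hnax h1 h2 h3
  exact hnax (sameCycle_finRotate_total a.pos a x)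

theorem take_succ_prod {L : List (Perm (Fin n))} {t : ℕ} (ht : t < L.length) :
    (L.take (t+1)).prod = (L.take t).prod * L.get ⟨t, ht⟩ := by
  rw [List.take_succ, List.getElem?_eq_getElem ht, List.prod_append]
  simp

theorem prefix_norm {α : Perm (Fin n)} {L : List (Perm (Fin n))}
    (hL : ∀ τ ∈ L, ∃ a b : Fin n, a ≠ b ∧ τ = Equiv.swap a b)
    (htot : normPerm (α * L.prod) = normPerm α + L.length) :
    ∀ t, t ≤ L.length → normPerm (α * (L.take t).prod) = normPerm α + t := by
  intro t ht
  have h1 : normPerm (α * (L.take t).prod) ≤ normPerm α + t := by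
    have := normPerm_mul_swaps_le α (L.take t) (fun τ hτ => hL τ (List.take_subset _ _ hτ))
    rwa [List.length_take, min_eq_left ht] at this
  have h2 : normPerm (α * L.prod) ≤ normPerm (α * (L.take t).prod) + (L.length - t) := by
    have hsplit : α * L.prod = (α * (L.take t).prod) * (L.drop t).prod := by
      rw [mul_assoc, List.prod_take_mul_prod_drop]
    rw [hsplit]
    have := normPerm_mul_swaps_le (α * (L.take t).prod) (L.drop t)
      (fun τ hτ => hL τ (List.drop_subset _ _ hτ))
    rwa [List.length_drop] at this
  omega

theorem INC_NC_of_precLe {σ : Perm (Fin n)} (h : precLe σ (finRotate n)) : INC σ ∧ NC σ := by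
  rcases Nat.eq_zero_or_pos n with rfl | hn
  · exact ⟨fun a => a.elim0, fun a => a.elim0⟩
  obtain ⟨L, hL1, hL2, hL3⟩ := exists_swap_list (σ⁻¹ * finRotate n)
  have hc : σ * L.prod = finRotate n := by
    rw [hL3, mul_inv_cancel_left]
  have htot : normPerm (σ * L.prod) = normPerm σ + L.length := by
    rw [hc, hL2]
    exact h
  have key : ∀ d, d ≤ L.length →
      INC (σ * (L.take (L.length - d)).prod) ∧ NC (σ * (L.take (L.length - d)).prod) := by
    intro d
    induction d with
    | zero =>
      intro _
      rw [Nat.sub_zero, List.take_length, hc]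
      exact ⟨INC_finRotate, NC_finRotate⟩
    | succ d ih =>
      intro hd
      obtain ⟨ihI, ihN⟩ := ih (by omega)
      set t := L.length - (d+1) with htdef
      have htlen : t < L.length := by omega
      have htt : L.length - d = t + 1 := by omega
      rw [htt] at ihI ihN
      obtain ⟨a, b, habne, hab⟩ := hL1 (L.get ⟨t, htlen⟩) (List.get_mem L _)
      have hprod : (L.take (t+1)).prod = (L.take t).prod * Equiv.swap a b := by
        rw [take_succ_prod htlen, hab]
      have hn1 : normPerm (σ * (L.take t).prod) = normPerm σ + t :=
        prefix_norm hL1 htot t htlen.le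
      have hn2 : normPerm (σ * (L.take (t+1)).prod) = normPerm σ + (t+1) :=
        prefix_norm hL1 htot (t+1) (by omega)
      have hmul : σ * (L.take (t+1)).prod = (σ * (L.take t).prod) * Equiv.swap a b := by
        rw [hprod, mul_assoc]
      have hmerge : ¬ (σ * (L.take t).prod).SameCycle a b := by
        intro hsc
        have := normPerm_mulswap_of_sameCycle habne hsc
        rw [← hmul] at this
        omega
      have hsc1 : (σ * (L.take (t+1)).prod).SameCycle a b := by
        rw [hmul]
        exact sameCycle_mulswap_ab hmerge
      have hback : (σ * (L.take (t+1)).prod) * Equiv.swap a b = σ * (L.take t).prod := by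
        rw [hmul, mul_assoc, Equiv.swap_mul_self, mul_one]
      rcases lt_or_gt_of_ne habne with hlt | hlt
      · have := step_preserve hlt hsc1 ihI ihN
        rwa [hback] at this
      · have hback' : (σ * (L.take (t+1)).prod) * Equiv.swap b a = σ * (L.take t).prod := by
          rw [← Equiv.swap_comm a b, hback]
        have := step_preserve hlt hsc1.symm ihI ihN
        rwa [hback'] at this
  have := key L.length le_rfl
  rwa [Nat.sub_self, List.take_zero, List.prod_nil, mul_one] at this

/-! ### the chain of prefix products -/

def gammaP' {n k : ℕ} (τ : Fin k → Equiv.Perm (Fin n)) (m : ℕ) : Equiv.Perm (Fin n) :=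
  ((List.ofFn τ).take m).prod

section Gamma

variable {k : ℕ} {i j : Fin k → Fin n}

/-- the swap sequence -/
def swapf (i j : Fin k → Fin n) : Fin k → Perm (Fin n) := fun m => Equiv.swap (i m) (j m)

theorem swapf_mem (hij : ∀ l, i l < j l) :
    ∀ τ ∈ List.ofFn (swapf i j), ∃ a b : Fin n, a ≠ b ∧ τ = Equiv.swap a b := by
  intro τ hτ
  rw [List.mem_ofFn] at hτ
  obtain ⟨m, rfl⟩ := hτ
  exact ⟨i m, j m, ne_of_lt (hij m), rfl⟩

theorem gamma_zero : gammaP' (swapf i j) 0 = 1 := by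
  simp [gammaP']

theorem gamma_succ {m : ℕ} (hm : m < k) :
    gammaP' (swapf i j) (m+1) = gammaP' (swapf i j) m * Equiv.swap (i ⟨m, hm⟩) (j ⟨m, hm⟩) := by
  have hm' : m < (List.ofFn (swapf i j)).length := by rw [List.length_ofFn]; exact hm
  rw [gammaP', gammaP', take_succ_prod hm', List.get_ofFn]
  congr 1

theorem gamma_top (hnorm : normPerm (List.ofFn (swapf i j)).prod = k) :
    normPerm ((1 : Perm (Fin n)) * (List.ofFn (swapf i j)).prod) =
      normPerm (1 : Perm (Fin n)) + (List.ofFn (swapf i j)).length := by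
  rw [one_mul, normPerm_one, List.length_ofFn, hnorm, Nat.zero_add]

theorem gamma_norm (hij : ∀ l, i l < j l)
    (hnorm : normPerm (List.ofFn (swapf i j)).prod = k) {m : ℕ} (hm : m ≤ k) :
    normPerm (gammaP' (swapf i j) m) = m := by
  have := prefix_norm (swapf_mem hij) (gamma_top hnorm) m (by rw [List.length_ofFn]; exact hm)
  rwa [one_mul, normPerm_one, Nat.zero_add] at this

theorem gamma_merge (hij : ∀ l, i l < j l)
    (hnorm : normPerm (List.ofFn (swapf i j)).prod = k) {m : ℕ} (hm : m < k) :
    ¬ (gammaP' (swapf i j) m).SameCycle (i ⟨m, hm⟩) (j ⟨m, hm⟩) := by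
  intro hsc
  have h1 := gamma_norm hij hnorm (le_of_lt hm)
  have h2 := gamma_norm hij hnorm (Nat.succ_le_of_lt hm)
  rw [gamma_succ hm] at h2
  have := normPerm_mulswap_of_sameCycle (ne_of_lt (hij ⟨m, hm⟩)) hsc
  omega

theorem gamma_persist (hij : ∀ l, i l < j l)
    (hnorm : normPerm (List.ofFn (swapf i j)).prod = k) (t : Fin k) :
    ∀ m : ℕ, (t : ℕ) < m → m ≤ k → (gammaP' (swapf i j) m).SameCycle (i t) (j t) := by
  intro m
  induction m with
  | zero => omega
  | succ m ih =>
    intro h1 h2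
    have hmk : m < k := by omega
    by_cases hm : (t : ℕ) = m
    · have ht : (⟨m, hmk⟩ : Fin k) = t := by
        apply Fin.ext
        simp [hm]
      rw [gamma_succ hmk, ht]
      exact sameCycle_mulswap_ab (ht ▸ gamma_merge hij hnorm hmk)
    · have ihm := ih (by omega) (by omega)
      rw [gamma_succ hmk]
      exact sameCycle_mulswap_of_not (gamma_merge hij hnorm hmk) ihm

theorem gamma_support (hij : ∀ l, i l < j l) :
    ∀ m : ℕ, m ≤ k → ∀ x : Fin n, gammaP' (swapf i j) m x ≠ x →
      ∃ t : Fin k, (t : ℕ) < m ∧ (x = i t ∨ x = j t) := by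
  intro m
  induction m with
  | zero =>
    intro _ x hx
    rw [gamma_zero] at hx
    exact absurd rfl hx
  | succ m ih =>
    intro hm x hx
    have hmk : m < k := by omega
    rw [gamma_succ hmk, Perm.mul_apply] at hx
    by_cases hxa : x = i ⟨m, hmk⟩
    · exact ⟨⟨m, hmk⟩, by simp, Or.inl hxa⟩
    · by_cases hxb : x = j ⟨m, hmk⟩
      · exact ⟨⟨m, hmk⟩, by simp, Or.inr hxb⟩
      · rw [Equiv.swap_apply_of_ne_of_ne hxa hxb] at hx
        obtain ⟨t, ht1, ht2⟩ := ih (by omega) x hx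
        exact ⟨t, by omega, ht2⟩

theorem gamma_prec (hij : ∀ l, i l < j l)
    (hnorm : normPerm (List.ofFn (swapf i j)).prod = k)
    (hprec : precLe (List.ofFn (swapf i j)).prod (finRotate n))
    {m : ℕ} (hm : m ≤ k) : precLe (gammaP' (swapf i j) m) (finRotate n) := by
  set L := List.ofFn (swapf i j) with hLdef
  have hLlen : L.length = k := List.length_ofFn
  have htop : gammaP' (swapf i j) k = L.prod := by
    rw [gammaP', ← hLdef, ← hLlen, List.take_length]
  set γm := gammaP' (swapf i j) m with hγm
  set c := finRotate n with hc
  have hprec' : normPerm c = k + normPerm (L.prod⁻¹ * c) := by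
    rw [hprec, hnorm]
  have hsplit : γm⁻¹ * L.prod = (L.drop m).prod := by
    have : L.prod = γm * (L.drop m).prod := by
      rw [hγm, gammaP', ← hLdef, List.prod_take_mul_prod_drop]
    rw [this, inv_mul_cancel_left]
  have hdropnorm : normPerm (γm⁻¹ * L.prod) ≤ k - m := by
    rw [hsplit]
    have := normPerm_mul_swaps_le 1 (L.drop m)
      (fun τ hτ => swapf_mem hij τ (List.drop_subset _ _ hτ))
    rwa [one_mul, normPerm_one, List.length_drop, hLlen, Nat.zero_add] at this
  have hup : normPerm (γm⁻¹ * c) ≤ (k - m) + normPerm (L.prod⁻¹ * c) := by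
    have heq : γm⁻¹ * c = (γm⁻¹ * L.prod) * (L.prod⁻¹ * c) := by
      group
    rw [heq]
    calc normPerm ((γm⁻¹ * L.prod) * (L.prod⁻¹ * c)) ≤
        normPerm (γm⁻¹ * L.prod) + normPerm (L.prod⁻¹ * c) := normPerm_mul_le _ _
      _ ≤ (k - m) + normPerm (L.prod⁻¹ * c) := by omega
  have hlow : normPerm c ≤ normPerm γm + normPerm (γm⁻¹ * c) := by
    have heq : c = γm * (γm⁻¹ * c) := by rw [mul_inv_cancel_left]
    calc normPerm c = normPerm (γm * (γm⁻¹ * c)) := by rw [← heq]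
      _ ≤ normPerm γm + normPerm (γm⁻¹ * c) := normPerm_mul_le _ _
  have hγnorm : normPerm γm = m := gamma_norm hij hnorm hm
  rw [precLe, hγnorm]
  omega

end Gamma

end Stmt15


open Stmt15

/-- For a non-decreasing path γ = ((i₁ j₁),…,(i_k j_k)) ∈ Σ*_n(k) and l ∈ {1,…,k}, j_l is the
minimum of {x ∈ supp(γ_l) : x > i_l}: it lies in this set and bounds it below. -/
theorem stmt15 (n k : ℕ) (i j : Fin k → Fin n) (hij : ∀ l, i l < j l)
    (hmono : Monotone i)
    (hγ : (fun l => Equiv.swap (i l) (j l)) ∈ SigmaSet n k) (l : Fin k) :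
    i l < j l ∧
    gammaP (fun m => Equiv.swap (i m) (j m)) ((l : ℕ) + 1) (j l) ≠ j l ∧
    ∀ x, gammaP (fun m => Equiv.swap (i m) (j m)) ((l : ℕ) + 1) x ≠ x → i l < x →
      j l ≤ x := by
  obtain ⟨hswap, hnorm, hprec⟩ := hγ
  have hgp : ∀ m : ℕ, gammaP (fun m => Equiv.swap (i m) (j m)) m = gammaP' (swapf i j) m :=
    fun m => rfl
  have hnorm' : normPerm (List.ofFn (swapf i j)).prod = k := hnorm
  have hprec' : precLe (List.ofFn (swapf i j)).prod (finRotate n) := hprec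
  set γ := gammaP' (swapf i j) ((l : ℕ) + 1) with hγdef
  set δ := gammaP' (swapf i j) (l : ℕ) with hδdef
  have hlmk : (l : ℕ) < k := l.isLt
  have hlk : (l : ℕ) + 1 ≤ k := hlmk
  have hfinl : (⟨(l : ℕ), hlmk⟩ : Fin k) = l := by apply Fin.ext; rfl
  have hstep : γ = δ * Equiv.swap (i l) (j l) := by
    rw [hγdef, hδdef, gamma_succ hlmk, hfinl]
  have hmerge : ¬ δ.SameCycle (i l) (j l) := by
    have := gamma_merge hij hnorm' hlmk
    rwa [hfinl] at this
  have hγjl : γ (j l) = δ (i l) := by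
    rw [hstep, Perm.mul_apply, Equiv.swap_apply_right]
  have goal2 : γ (j l) ≠ j l := by
    rw [hγjl]
    intro h
    apply hmerge
    have h2 : δ.SameCycle (i l) (δ (i l)) := (SameCycle.refl δ (i l)).apply_right
    rwa [h] at h2
  refine ⟨hij l, by rw [hgp ((l : ℕ) + 1)]; exact goal2, ?_⟩
  intro x hx hilx
  rw [hgp ((l : ℕ) + 1)] at hx
  by_contra hcon
  push_neg at hcon
  obtain ⟨t, htl, htx⟩ := gamma_support hij ((l : ℕ) + 1) hlk x hx
  have htl' : t ≤ l := by rw [Fin.le_def]; omega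
  rcases htx with rfl | rfl
  · exact absurd hilx (not_lt.2 (hmono htl'))
  · have htne : t ≠ l := by
      intro h
      rw [h] at hcon
      exact absurd hcon (lt_irrefl _)
    have htll : (t : ℕ) < (l : ℕ) := by
      rcases lt_or_eq_of_le htl' with h | h
      · exact h
      · exact absurd h htne
    have hscT : γ.SameCycle (i t) (j t) :=
      gamma_persist hij hnorm' t ((l : ℕ) + 1) (by omega) hlk
    have hscL : γ.SameCycle (i l) (j l) :=
      gamma_persist hij hnorm' l ((l : ℕ) + 1) (by omega) hlk
    obtain ⟨hINCγ, hNCγ⟩ := INC_NC_of_precLe (gamma_prec hij hnorm' hprec' hlk)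
    by_cases hcase : γ.SameCycle (i l) (i t)
    · obtain ⟨hINCδ, -⟩ := INC_NC_of_precLe (gamma_prec hij hnorm' hprec' (le_of_lt hlmk))
      have hsc_il_jt : γ.SameCycle (i l) (j t) := hcase.trans hscT
      obtain ⟨hA, hB⟩ := hINCγ (i l) (j t) hsc_il_jt hilx
      have hγil : γ (i l) = δ (j l) := by
        rw [hstep, Perm.mul_apply, Equiv.swap_apply_left]
      set y := δ (j l) with hydef
      have hy1 : i l < y := by rw [← hγil]; exact hA
      have hy2 : y < j l := by
        rw [← hγil]
        exact lt_of_le_of_lt hB hcon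
      have hjl_supp : δ (j l) ≠ j l := ne_of_lt hy2
      have hmaxD : ∀ v, δ.SameCycle (j l) v → v ≤ j l := by
        intro v hv
        by_contra hcv
        push_neg at hcv
        obtain ⟨h1, -⟩ := hINCδ (j l) v hv hcv
        exact absurd h1 (not_lt.2 (le_of_lt hy2))
      have hminD : ∀ w, δ.SameCycle (j l) w → δ (j l) ≤ w :=
        apply_max_le hINCδ hjl_supp hmaxD
      have hyD : δ.SameCycle (j l) y := (SameCycle.refl δ (j l)).apply_right
      have hy_supp : δ y ≠ y := by
        intro h
        exact absurd (hyD.eq_of_right h) (ne_of_gt hy2)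
      obtain ⟨t', ht'1, ht'2⟩ := gamma_support hij (l : ℕ) (le_of_lt hlmk) y hy_supp
      have ht'le : t' ≤ l := by rw [Fin.le_def]; omega
      rcases ht'2 with h | h
      · have h2 := hmono ht'le
        rw [← h] at h2
        exact absurd hy1 (not_lt.2 h2)
      · have hsct' : δ.SameCycle (i t') (j t') :=
          gamma_persist hij hnorm' t' (l : ℕ) ht'1 (le_of_lt hlmk)
        have hit'D : δ.SameCycle (j l) (i t') := hyD.trans (h ▸ hsct'.symm)
        have h3 := hminD (i t') hit'D
        have hlt2 : i t' < j t' := hij t'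
        rw [← h] at hlt2
        exact absurd h3 (not_le.2 hlt2)
    · have hitil : i t < i l := by
        rcases lt_or_eq_of_le (hmono htl') with h | h
        · exact h
        · exfalso
          apply hcase
          rw [← h]
      exact hNCγ (i t) (i l) (j t) (j l) hscT hscL (fun hh => hcase hh.symm) hitil hilx hcon
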